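/- Explicit magnetic Thomas-Fermi ground-state energy: let s > 0, c > 0, N > 0, set λ := (4c(s+2)/s)^{s/(s+2)} and ρ⋆(x) := (N/(4πc))(λ − |x|^s)₊ for x ∈ ℝ². Then ∫_{ℝ²} (2πc ρ⋆(x)² + N |x|^s ρ⋆(x)) dx = N² · (s/(8c(s+1))) · λ^{(2s+2)/s} = N² · (s/(8(s+1))) · (4(s+2)/s)^{(2s+2)/(s+2)} · c^{s/(s+2)}. -/

import Mathlib

open Real MeasureTheory Metric

lemma radial_integral_aux (s lam : ℝ) (hs : 0 < s) (hlam : 0 < lam) :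
    ∫ y in Set.Ioi (0:ℝ), y * max (lam ^ 2 - (y ^ s) ^ 2) 0
      = s / (2 * s + 2) * lam ^ ((2 * s + 2) / s) := by
  set R : ℝ := lam ^ (1 / s) with hR
  have hRpos : 0 < R := Real.rpow_pos_of_pos hlam _
  have hRs : R ^ s = lam := by
    rw [hR, ← Real.rpow_mul hlam.le, one_div, inv_mul_cancel₀ hs.ne', Real.rpow_one]
  set g : ℝ → ℝ := fun y => y * max (lam ^ 2 - (y ^ s) ^ 2) 0 with hg
  -- the integrand vanishes outside `Ioc 0 R`
  have hzero : ∀ y ∈ Set.Ioi (0:ℝ), g y = (Set.Ioc (0:ℝ) R).indicator g y := by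
    intro y hy
    rcases le_or_gt y R with h | h
    · rw [Set.indicator_of_mem (Set.mem_Ioc.mpr ⟨hy, h⟩)]
    · rw [Set.indicator_of_notMem (by simp [h.not_ge])]
      have h1 : lam < y ^ s := by
        rw [← hRs]
        exact Real.rpow_lt_rpow hRpos.le h hs
      have h2 : lam ^ 2 < (y ^ s) ^ 2 := by
        apply pow_lt_pow_left₀ h1 hlam.le
        norm_num
      simp [hg, max_eq_right (by linarith : lam ^ 2 - (y ^ s) ^ 2 ≤ 0)]
  have step1 : ∫ y in Set.Ioi (0:ℝ), g y = ∫ y in Set.Ioc (0:ℝ) R, g y := by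
    rw [setIntegral_congr_fun measurableSet_Ioi hzero, integral_indicator measurableSet_Ioc,
      Measure.restrict_restrict measurableSet_Ioc]
    congr 1
    rw [Set.Ioc_inter_Ioi]
    simp
  have step2 : ∫ y in Set.Ioc (0:ℝ) R, g y = ∫ y in (0:ℝ)..R, g y := by
    rw [intervalIntegral.integral_of_le hRpos.le]
  have hcong : ∀ y ∈ Set.uIcc (0:ℝ) R, g y = lam ^ 2 * y - y ^ (2 * s + 1) := by
    intro y hy
    rw [Set.uIcc_of_le hRpos.le] at hy
    rcases eq_or_lt_of_le hy.1 with h0 | h0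
    · simp [hg, ← h0, Real.zero_rpow (by positivity : 2 * s + 1 ≠ 0)]
    · have hys : y ^ s ≤ lam := by
        rw [← hRs]
        exact Real.rpow_le_rpow h0.le hy.2 hs.le
      have h2 : (y ^ s) ^ 2 ≤ lam ^ 2 := by
        apply pow_le_pow_left₀ (by positivity) hys
      have hmax : max (lam ^ 2 - (y ^ s) ^ 2) 0 = lam ^ 2 - (y ^ s) ^ 2 :=
        max_eq_left (by linarith)
      have hpow : y * (y ^ s) ^ 2 = y ^ (2 * s + 1) := by
        rw [← Real.rpow_natCast (y ^ s) 2, ← Real.rpow_mul h0.le]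
        nth_rewrite 1 [← Real.rpow_one y]
        rw [← Real.rpow_add h0]
        congr 1
        push_cast
        ring
      rw [hg]
      simp only [hmax]
      rw [mul_sub, hpow]
      ring
  have step3 : ∫ y in (0:ℝ)..R, g y = ∫ y in (0:ℝ)..R, (lam ^ 2 * y - y ^ (2 * s + 1)) :=
    intervalIntegral.integral_congr hcong
  have hint1 : IntervalIntegrable (fun y : ℝ => lam ^ 2 * y) volume 0 R :=
    (intervalIntegral.intervalIntegrable_id).const_mul _
  have hint2 : IntervalIntegrable (fun y : ℝ => y ^ (2 * s + 1)) volume 0 R :=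
    intervalIntegral.intervalIntegrable_rpow' (by linarith)
  have hL : lam ^ ((2 * s + 2) / s) = lam ^ 2 * R ^ 2 := by
    rw [hR, ← Real.rpow_natCast (lam ^ (1/s)) 2, ← Real.rpow_mul hlam.le,
      ← Real.rpow_natCast lam 2, ← Real.rpow_add hlam]
    congr 1
    push_cast
    field_simp
  have hR2 : R ^ (2 * s + 1 + 1) = lam ^ ((2 * s + 2) / s) := by
    rw [hR, ← Real.rpow_mul hlam.le]
    congr 1
    field_simp
    ring
  have step4 : ∫ y in (0:ℝ)..R, (lam ^ 2 * y - y ^ (2 * s + 1))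
      = lam ^ 2 * (R ^ 2 / 2) - R ^ (2 * s + 1 + 1) / (2 * s + 1 + 1) := by
    rw [intervalIntegral.integral_sub hint1 hint2,
      intervalIntegral.integral_const_mul, integral_id,
      integral_rpow (Or.inl (by linarith)),
      Real.zero_rpow (by positivity : 2 * s + 1 + 1 ≠ 0)]
    ring
  rw [step1, step2, step3, step4, hR2]
  rw [show lam ^ 2 * (R ^ 2 / 2) = lam ^ 2 * R ^ 2 / 2 by ring, ← hL]
  have hL' : (0:ℝ) < lam ^ ((2 * s + 2) / s) := Real.rpow_pos_of_pos hlam _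
  field_simp
  ring

/-- Explicit magnetic Thomas-Fermi ground-state energy for the potential `V(x) = |x|^s`:
with `λ = (4c(s+2)/s)^(s/(s+2))` and `ρ⋆(x) = (N/(4πc))(λ - |x|^s)₊`, the energy
`∫ (2πc ρ⋆² + N |x|^s ρ⋆)` equals `N² (s/(8c(s+1))) λ^((2s+2)/s)`, i.e.
`N² (s/(8(s+1))) (4(s+2)/s)^((2s+2)/(s+2)) c^(s/(s+2))`. -/
theorem mTF_ground_state_energy (s c N : ℝ) (hs : 0 < s) (hc : 0 < c) (hN : 0 < N)
    (lam : ℝ) (hlam : lam = (4 * c * (s + 2) / s) ^ (s / (s + 2)))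
    (ρstar : EuclideanSpace ℝ (Fin 2) → ℝ)
    (hρstar : ∀ x, ρstar x = N / (4 * π * c) * max (lam - ‖x‖ ^ s) 0) :
    (∫ x : EuclideanSpace ℝ (Fin 2),
        (2 * π * c * ρstar x ^ 2 + N * ‖x‖ ^ s * ρstar x))
      = N ^ 2 * (s / (8 * c * (s + 1))) * lam ^ ((2 * s + 2) / s) ∧
    N ^ 2 * (s / (8 * c * (s + 1))) * lam ^ ((2 * s + 2) / s)
      = N ^ 2 * (s / (8 * (s + 1))) * (4 * (s + 2) / s) ^ ((2 * s + 2) / (s + 2))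
          * c ^ (s / (s + 2)) := by
  have hπ : (0:ℝ) < π := Real.pi_pos
  have hB : (0:ℝ) < 4 * c * (s + 2) / s := by positivity
  have hlampos : 0 < lam := hlam ▸ Real.rpow_pos_of_pos hB _
  set K : ℝ := N ^ 2 / (8 * π * c) with hK
  -- pointwise identity
  have hpt : ∀ x : EuclideanSpace ℝ (Fin 2),
      2 * π * c * ρstar x ^ 2 + N * ‖x‖ ^ s * ρstar x
        = K * max (lam ^ 2 - (‖x‖ ^ s) ^ 2) 0 := by
    intro x
    set t : ℝ := ‖x‖ ^ s with ht
    have htnn : 0 ≤ t := Real.rpow_nonneg (norm_nonneg x) s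
    rw [hρstar x, ← ht]
    rcases le_or_gt t lam with h | h
    · have h1 : max (lam - t) 0 = lam - t := max_eq_left (by linarith)
      have h2 : t ^ 2 ≤ lam ^ 2 := pow_le_pow_left₀ htnn h 2
      have h3 : max (lam ^ 2 - t ^ 2) 0 = lam ^ 2 - t ^ 2 := max_eq_left (by linarith)
      rw [h1, h3, hK]
      field_simp
      ring
    · have h1 : max (lam - t) 0 = 0 := max_eq_right (by linarith)
      have h2 : lam ^ 2 < t ^ 2 := by
        apply pow_lt_pow_left₀ h hlampos.le
        norm_num
      have h3 : max (lam ^ 2 - t ^ 2) 0 = 0 := max_eq_right (by linarith)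
      rw [h1, h3]
      ring
  have hvol : (volume (ball (0 : EuclideanSpace ℝ (Fin 2)) 1)).toReal = π := by
    rw [EuclideanSpace.volume_ball]
    norm_num [Real.Gamma_two, Real.sq_sqrt Real.pi_nonneg, ENNReal.toReal_ofReal Real.pi_nonneg]
  have hmain : (∫ x : EuclideanSpace ℝ (Fin 2),
        (2 * π * c * ρstar x ^ 2 + N * ‖x‖ ^ s * ρstar x))
      = N ^ 2 * (s / (8 * c * (s + 1))) * lam ^ ((2 * s + 2) / s) := by
    have heq : (∫ x : EuclideanSpace ℝ (Fin 2),
        (2 * π * c * ρstar x ^ 2 + N * ‖x‖ ^ s * ρstar x))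
        = ∫ x : EuclideanSpace ℝ (Fin 2),
            (fun r : ℝ => K * max (lam ^ 2 - (r ^ s) ^ 2) 0) ‖x‖ := by
      congr 1
      funext x
      exact hpt x
    rw [heq, MeasureTheory.integral_fun_norm_addHaar
      (volume : Measure (EuclideanSpace ℝ (Fin 2)))
      (fun r : ℝ => K * max (lam ^ 2 - (r ^ s) ^ 2) 0)]
    simp only [finrank_euclideanSpace, Fintype.card_fin, measureReal_def, hvol, smul_eq_mul, nsmul_eq_mul,
      Nat.cast_ofNat, pow_one]
    have : ∫ y in Set.Ioi (0:ℝ), y ^ (2 - 1) * (K * max (lam ^ 2 - (y ^ s) ^ 2) 0)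
        = K * ∫ y in Set.Ioi (0:ℝ), y * max (lam ^ 2 - (y ^ s) ^ 2) 0 := by
      rw [← integral_const_mul]
      congr 1
      funext y
      norm_num
      ring
    rw [this, radial_integral_aux s lam hs hlampos, hK]
    field_simp
  refine ⟨hmain, ?_⟩
  -- second identity : pure rpow algebra
  have hkey : lam ^ ((2 * s + 2) / s)
      = (4 * (s + 2) / s) ^ ((2 * s + 2) / (s + 2)) * c ^ ((2 * s + 2) / (s + 2)) := by
    rw [hlam, ← Real.rpow_mul hB.le]
    have hexp : s / (s + 2) * ((2 * s + 2) / s) = (2 * s + 2) / (s + 2) := by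
      field_simp
    rw [hexp, show 4 * c * (s + 2) / s = 4 * (s + 2) / s * c by field_simp,
      Real.mul_rpow (by positivity) hc.le]
  have hcpow : c ^ ((2 * s + 2) / (s + 2)) = c * c ^ (s / (s + 2)) := by
    have h : (2 * s + 2) / (s + 2) = 1 + s / (s + 2) := by
      field_simp
      ring
    rw [h, Real.rpow_add hc, Real.rpow_one]
  rw [hkey, hcpow]
  field_simp
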